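/- Hoffman's ratio bound: if Γ is a k-regular graph on v vertices with adjacency matrix A having smallest eigenvalue λ < 0, and Y is an independent set (coclique) of Γ, then |Y| ≤ v / (1 - k/λ). -/

import Mathlib

open Finset Matrix SimpleGraph

/-- Hoffman's ratio bound: a coclique `Y` in a `k`-regular graph with smallest adjacency
eigenvalue `lam < 0` satisfies `|Y| ≤ v / (1 - k/lam)`. -/
theorem stmt_4 {V : Type*} [Fintype V] [DecidableEq V]
    (G : SimpleGraph V) [DecidableRel G.Adj]
    (k : ℕ) (hreg : G.IsRegularOfDegree k) (lam : ℝ) (hneg : lam < 0)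
    (hlam_eig : ∃ v : V → ℝ, v ≠ 0 ∧ (G.adjMatrix ℝ).mulVec v = lam • v)
    (hlam_min : ∀ (μ : ℝ) (v : V → ℝ), v ≠ 0 → (G.adjMatrix ℝ).mulVec v = μ • v → lam ≤ μ)
    (Y : Finset V) (hY : ∀ x ∈ Y, ∀ y ∈ Y, ¬ G.Adj x y) :
    (Y.card : ℝ) ≤ (Fintype.card V : ℝ) / (1 - (k : ℝ) / lam) := by
  classical
  set A := G.adjMatrix ℝ with hAdef
  have hlam_ne : lam ≠ 0 := ne_of_lt hneg
  have hdenom : (0:ℝ) < 1 - (k:ℝ)/lam := by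
    have h1 : (k:ℝ)/lam ≤ 0 := div_nonpos_of_nonneg_of_nonpos (Nat.cast_nonneg k) hneg.le
    linarith
  rcases Y.eq_empty_or_nonempty with rfl | hYne
  · simp only [Finset.card_empty, Nat.cast_zero]
    positivity
  have hVpos : 0 < Fintype.card V := Fintype.card_pos_iff.mpr ⟨hYne.choose⟩
  set nR : ℝ := (Fintype.card V : ℝ) with hn
  set yR : ℝ := (Y.card : ℝ) with hy
  have hnpos : (0:ℝ) < nR := by rw [hn]; exact_mod_cast hVpos
  have hypos : (0:ℝ) < yR := by rw [hy]; exact_mod_cast Finset.card_pos.mpr hYne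
  have hB : (A - lam • (1 : Matrix V V ℝ)).IsHermitian := by
    ext i j
    simp only [Matrix.conjTranspose_apply, Matrix.sub_apply, Matrix.smul_apply,
      Matrix.one_apply, hAdef, SimpleGraph.adjMatrix_apply, star_trivial, smul_eq_mul]
    by_cases h : i = j
    · simp [h]
    · simp [h, Ne.symm h, G.adj_comm]
  have hPSD : (A - lam • (1 : Matrix V V ℝ)).PosSemidef := by
    rw [hB.posSemidef_iff_eigenvalues_nonneg, Pi.le_def]; simp only [Pi.zero_apply]
    intro j
    have hv0 : (⇑(hB.eigenvectorBasis j) : V → ℝ) ≠ 0 :=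
      fun h => hB.eigenvectorBasis.orthonormal.ne_zero j (by ext i; exact congrFun h i)
    have hmv := hB.mulVec_eigenvectorBasis j
    rw [Matrix.sub_mulVec, Matrix.smul_mulVec, Matrix.one_mulVec] at hmv
    have hAe : A *ᵥ ⇑(hB.eigenvectorBasis j)
        = (hB.eigenvalues j + lam) • ⇑(hB.eigenvectorBasis j) := by
      rw [add_smul]
      linear_combination (norm := module) hmv
    have := hlam_min (hB.eigenvalues j + lam) _ hv0 hAe
    linarith
  set c : ℝ := yR / nR with hc
  set a : V → ℝ := fun i => if i ∈ Y then (1:ℝ) else 0 with ha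
  set x : V → ℝ := fun i => a i - c with hx
  have hquad : lam * (x ⬝ᵥ x) ≤ x ⬝ᵥ A *ᵥ x := by
    have h0 := hPSD.dotProduct_mulVec_nonneg x
    have hsx : star x = x := by ext i; simp
    rw [hsx, Matrix.sub_mulVec, Matrix.smul_mulVec, Matrix.one_mulVec,
      dotProduct_sub, dotProduct_smul] at h0
    simp only [smul_eq_mul] at h0
    linarith
  have hsum_a : ∑ i, a i = yR := by
    simp [ha, hy]
  have hsum_a2 : ∑ i, a i * a i = yR := by
    rw [← hsum_a]
    refine Finset.sum_congr rfl fun i _ => ?_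
    simp only [ha]
    split_ifs <;> ring
  have hdeg : ∀ i : V, ∑ j, (if G.Adj i j then (1:ℝ) else 0) = (k:ℝ) := by
    intro i
    rw [← Finset.sum_filter, Finset.sum_const]
    have h2 : (Finset.univ.filter (fun j => G.Adj i j)) = G.neighborFinset i := by
      ext j; simp [SimpleGraph.mem_neighborFinset]
    rw [h2]
    simp [hreg i]
  have hxx : x ⬝ᵥ x = yR - 2*c*yR + c^2*nR := by
    simp only [dotProduct, hx]
    have h3 : ∀ i : V, (a i - c) * (a i - c) = a i * a i - 2*c*(a i) + c^2 := fun i => by ring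
    calc ∑ i, (a i - c) * (a i - c)
        = ∑ i, (a i * a i - 2*c*(a i) + c^2) := Finset.sum_congr rfl fun i _ => h3 i
      _ = yR - 2*c*yR + c^2*nR := by
          rw [Finset.sum_add_distrib, Finset.sum_sub_distrib, hsum_a2, ← Finset.mul_sum,
            hsum_a, Finset.sum_const]
          simp only [Finset.card_univ, nsmul_eq_mul, hn]
          ring
  have hS1 : ∑ i, ∑ j, (if G.Adj i j then a i * a j else 0) = 0 := by
    refine Finset.sum_eq_zero fun i _ => Finset.sum_eq_zero fun j _ => ?_
    simp only [ha]
    split_ifs with h h1 h2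
    · exact absurd h (hY i h1 j h2)
    all_goals ring
  have hrow : ∀ (f : V → ℝ) (i : V), ∑ j, (if G.Adj i j then f i else 0) = (k:ℝ) * f i := by
    intro f i
    have h4 : ∀ j, (if G.Adj i j then f i else 0) = (if G.Adj i j then (1:ℝ) else 0) * f i :=
      fun j => by split_ifs <;> ring
    rw [Finset.sum_congr rfl (fun j _ => h4 j), ← Finset.sum_mul, hdeg i]
  have hS2 : ∑ i, ∑ j, (if G.Adj i j then a i else 0) = (k:ℝ) * yR := by
    calc ∑ i, ∑ j, (if G.Adj i j then a i else 0) = ∑ i, (k:ℝ) * a i :=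
          Finset.sum_congr rfl fun i _ => hrow a i
      _ = (k:ℝ) * yR := by rw [← Finset.mul_sum, hsum_a]
  have hS3 : ∑ i, ∑ j, (if G.Adj i j then a j else 0) = (k:ℝ) * yR := by
    rw [Finset.sum_comm]
    have h5 : ∀ j i : V, (if G.Adj i j then a j else 0) = (if G.Adj j i then a j else 0) := by
      intro j i; simp only [G.adj_comm i j]
    calc ∑ j, ∑ i, (if G.Adj i j then a j else 0)
        = ∑ j, ∑ i, (if G.Adj j i then a j else 0) := by
          exact Finset.sum_congr rfl fun j _ => Finset.sum_congr rfl fun i _ => h5 j i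
      _ = ∑ j, (k:ℝ) * a j := Finset.sum_congr rfl fun j _ => hrow a j
      _ = (k:ℝ) * yR := by rw [← Finset.mul_sum, hsum_a]
  have hS4 : ∑ i : V, ∑ j : V, (if G.Adj i j then (1:ℝ) else 0) = (k:ℝ) * nR := by
    calc ∑ i : V, ∑ j : V, (if G.Adj i j then (1:ℝ) else 0) = ∑ _i : V, (k:ℝ) :=
          Finset.sum_congr rfl fun i _ => hdeg i
      _ = (k:ℝ) * nR := by
          rw [Finset.sum_const]
          simp only [Finset.card_univ, nsmul_eq_mul, hn]
          ring
  have hQ : x ⬝ᵥ A *ᵥ x = c^2*((k:ℝ)*nR) - 2*c*((k:ℝ)*yR) := by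
    rw [hAdef, SimpleGraph.dotProduct_mulVec_adjMatrix]
    have h6 : ∀ i j : V, (if G.Adj i j then x i * x j else 0)
        = (if G.Adj i j then a i * a j else 0) - c * (if G.Adj i j then a j else 0)
          - c * (if G.Adj i j then a i else 0) + c^2 * (if G.Adj i j then (1:ℝ) else 0) := by
      intro i j
      simp only [hx]
      split_ifs <;> ring
    calc ∑ i, ∑ j, (if G.Adj i j then x i * x j else 0)
        = ∑ i, ∑ j, ((if G.Adj i j then a i * a j else 0) - c * (if G.Adj i j then a j else 0)
          - c * (if G.Adj i j then a i else 0) + c^2 * (if G.Adj i j then (1:ℝ) else 0)) := by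
          exact Finset.sum_congr rfl fun i _ => Finset.sum_congr rfl fun j _ => h6 i j
      _ = c^2*((k:ℝ)*nR) - 2*c*((k:ℝ)*yR) := by
          simp only [Finset.sum_add_distrib, Finset.sum_sub_distrib, ← Finset.mul_sum]
          rw [hS1, hS2, hS3, hS4]
          ring
  -- put it together
  have hcn : c * nR = yR := div_mul_cancel₀ _ (ne_of_gt hnpos)
  have hk : (k:ℝ)/lam * lam = k := div_mul_cancel₀ _ hlam_ne
  rw [hxx, hQ] at hquad
  rw [le_div_iff₀ hdenom]
  clear hsum_a hsum_a2 hdeg hS1 hS2 hS3 hS4 hrow hxx hQ hPSD hB hlam_min hlam_eig hY hreg hx ha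
  clear_value x
  clear x a
  set t : ℝ := (k:ℝ)/lam with ht
  -- hquad : lam * (yR - 2cyR + c²nR) ≤ c²knR - 2ckyR, with c*nR = yR, t*lam = k
  have hc2n : c^2 * nR = c * yR := by rw [sq, mul_assoc, hcn]
  have H' : lam * (yR - c*yR + c*t*yR) ≤ 0 := by
    have : lam * (yR - 2*c*yR + c*yR) ≤ c*yR*(t*lam) - 2*c*(t*lam)*yR := by
      rw [hk]
      calc lam * (yR - 2*c*yR + c*yR) = lam * (yR - 2*c*yR + c^2*nR) := by rw [hc2n]
        _ ≤ c^2*((k:ℝ)*nR) - 2*c*((k:ℝ)*yR) := hquad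
        _ = c*yR*(k:ℝ) - 2*c*(k:ℝ)*yR := by rw [← mul_assoc, ← hc2n]; ring
    linarith [this]
  have h7 : 0 ≤ yR - c*yR + c*t*yR := by nlinarith [H']
  have h8 : 0 ≤ 1 - c + c*t := by nlinarith [h7, hypos]
  have h9 : 0 ≤ nR - yR + t*yR := by
    have h10 := mul_nonneg hnpos.le h8
    have h11 : c * nR * t = yR * t := by rw [hcn]
    nlinarith [h10, hcn, h11]
  nlinarith [h9]
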